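/- Let G₁ and G₂ be disjoint bipartite graphs with bipartitions X₁ ⊔ Y₁ and X₂ ⊔ Y₂, each Ferrers-good, and let G be formed by identifying a vertex x₁ ∈ X₁ with a vertex x₂ ∈ X₂. Then G is Ferrers-good. -/

import Mathlib

noncomputable section
open scoped Classical

def spanningTreeCount {V : Type*} (G : SimpleGraph V) : ℕ :=
  {H : G.Subgraph | H.IsSpanning ∧ H.coe.IsTree}.ncard

def sdeg {V : Type*} (G : SimpleGraph V) (v : V) : ℕ := (G.neighborSet v).ncard

def IsBipartitionOn {V : Type*} (G : SimpleGraph V) (X Y : Set V) : Prop :=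
  Disjoint X Y ∧ X ∪ Y = Set.univ ∧
    ∀ u v, G.Adj u v → (u ∈ X ∧ v ∈ Y) ∨ (u ∈ Y ∧ v ∈ X)

def FerrersGood {V : Type*} [Fintype V] (G : SimpleGraph V) (X Y : Set V) : Prop :=
  (spanningTreeCount G : ℚ) ≤
    (∏ v : V, (sdeg G v : ℚ)) / ((X.ncard : ℚ) * (Y.ncard : ℚ))

namespace GlueAux

open SimpleGraph Set

variable {V : Type*} {G : SimpleGraph V} {H K : G.Subgraph} {x : V}

lemma subgraph_finite {W : Type*} [Finite W] (G : SimpleGraph W) : Finite G.Subgraph :=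
  Finite.of_injective (fun H => (H.verts, H.Adj))
    (fun a b hab => SimpleGraph.Subgraph.ext (congrArg Prod.fst hab) (congrArg Prod.snd hab))

lemma adj_or (hc : H ⊔ K = ⊤) {u v : V} (h : G.Adj u v) : H.Adj u v ∨ K.Adj u v := by
  have h' : (H ⊔ K).Adj u v := by rw [hc]; exact h
  exact SimpleGraph.Subgraph.sup_adj.mp h'

lemma eq_x (hm : H.verts ∩ K.verts = {x}) {v : V} (h1 : v ∈ H.verts) (h2 : v ∈ K.verts) :
    v = x := by
  have : v ∈ H.verts ∩ K.verts := ⟨h1, h2⟩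
  rw [hm] at this; exact this

/-- Restriction of a subgraph of `G` to a subgraph of `H.coe`. -/
def restr (hc : H ⊔ K = ⊤) (hm : H.verts ∩ K.verts = {x}) (T : G.Subgraph) :
    H.coe.Subgraph where
  verts := Set.univ
  Adj u v := T.Adj u.1 v.1
  adj_sub := by
    intro u v h
    rcases adj_or hc h.adj_sub with h' | h'
    · exact h'
    · exact absurd ((eq_x hm u.2 h'.fst_mem).trans (eq_x hm v.2 h'.snd_mem).symm) h'.adj_sub.ne
  edge_vert := fun _ => Set.mem_univ _
  symm := ⟨fun u v h => T.adj_symm h⟩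

lemma restr_spanning (hc : H ⊔ K = ⊤) (hm : H.verts ∩ K.verts = {x}) (T : G.Subgraph) :
    (restr hc hm T).IsSpanning := fun v => Set.mem_univ v

lemma reach_claim (hc : H ⊔ K = ⊤) (hm : H.verts ∩ K.verts = {x}) (hx : x ∈ H.verts)
    {T : G.Subgraph} {p q : ↥T.verts} (w : T.coe.Walk p q) :
    ∀ (hq : q.1 ∈ H.verts),
      (∀ hp : p.1 ∈ H.verts,
        (restr hc hm T).coe.Reachable ⟨⟨p.1, hp⟩, Set.mem_univ _⟩ ⟨⟨q.1, hq⟩, Set.mem_univ _⟩) ∧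
      (p.1 ∉ H.verts →
        (restr hc hm T).coe.Reachable ⟨⟨x, hx⟩, Set.mem_univ _⟩ ⟨⟨q.1, hq⟩, Set.mem_univ _⟩) := by
  induction w with
  | nil =>
    intro hq
    exact ⟨fun hp => Reachable.refl _, fun hp => absurd hq hp⟩
  | @cons a b c h w ih =>
    intro hq
    have hTadj : T.Adj a.1 b.1 := h
    by_cases hb : b.1 ∈ H.verts
    · refine ⟨fun hp => ?_, fun hp => ?_⟩
      · have hadj : (restr hc hm T).coe.Adj ⟨⟨a.1, hp⟩, Set.mem_univ _⟩
            ⟨⟨b.1, hb⟩, Set.mem_univ _⟩ := hTadj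
        exact hadj.reachable.trans ((ih hq).1 hb)
      · rcases adj_or hc hTadj.adj_sub with h' | h'
        · exact absurd h'.fst_mem hp
        · have hv : (⟨⟨b.1, hb⟩, Set.mem_univ _⟩ : ↥(restr hc hm T).verts)
              = ⟨⟨x, hx⟩, Set.mem_univ _⟩ :=
            Subtype.ext (Subtype.ext (eq_x hm hb h'.snd_mem))
          exact hv ▸ (ih hq).1 hb
    · refine ⟨fun hp => ?_, fun hp => (ih hq).2 hb⟩
      rcases adj_or hc hTadj.adj_sub with h' | h'
      · exact absurd h'.snd_mem hb
      · have hv : (⟨⟨a.1, hp⟩, Set.mem_univ _⟩ : ↥(restr hc hm T).verts)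
            = ⟨⟨x, hx⟩, Set.mem_univ _⟩ :=
          Subtype.ext (Subtype.ext (eq_x hm hp h'.fst_mem))
        exact hv ▸ (ih hq).2 hb

lemma restr_isTree (hc : H ⊔ K = ⊤) (hm : H.verts ∩ K.verts = {x}) (hx : x ∈ H.verts)
    {T : G.Subgraph} (hT : T.IsSpanning ∧ T.coe.IsTree) :
    (restr hc hm T).coe.IsTree := by
  constructor
  · rw [connected_iff]
    refine ⟨?_, ⟨⟨⟨x, hx⟩, Set.mem_univ _⟩⟩⟩
    intro u v
    obtain ⟨w⟩ := hT.2.isConnected.preconnected ⟨u.1.1, hT.1 _⟩ ⟨v.1.1, hT.1 _⟩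
    exact (reach_claim hc hm hx w v.1.2).1 u.1.2
  · intro v c hcyc
    let f : (restr hc hm T).coe →g T.coe :=
      ⟨fun v => ⟨v.1.1, hT.1 _⟩, fun {a b} h => h⟩
    have finj : Function.Injective f := by
      intro a b hab
      have h1 : (f a).1 = (f b).1 := Subtype.ext_iff.mp hab
      exact Subtype.ext (Subtype.ext h1)
    exact hT.2.IsAcyclic (c.map f) (hcyc.map finj)

lemma restr_adj_of (hc : H ⊔ K = ⊤) (hm : H.verts ∩ K.verts = {x}) (T : G.Subgraph)
    {u v : V} (hu : u ∈ H.verts) (hv : v ∈ H.verts) (h : T.Adj u v) :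
    (restr hc hm T).Adj ⟨u, hu⟩ ⟨v, hv⟩ := h

lemma adj_of_restr (hc : H ⊔ K = ⊤) (hm : H.verts ∩ K.verts = {x}) (T : G.Subgraph)
    {u v : ↥H.verts} (h : (restr hc hm T).Adj u v) : T.Adj u.1 v.1 := h

lemma adj_of_eq (hc : H ⊔ K = ⊤) (hm : H.verts ∩ K.verts = {x})
    (hc₂ : K ⊔ H = ⊤) (hm₂ : K.verts ∩ H.verts = {x}) {T T' : G.Subgraph}
    (e1 : restr hc hm T = restr hc hm T') (e2 : restr hc₂ hm₂ T = restr hc₂ hm₂ T')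
    {u v : V} (h : T.Adj u v) : T'.Adj u v := by
  rcases adj_or hc h.adj_sub with h' | h'
  · have hr : (restr hc hm T).Adj ⟨u, h'.fst_mem⟩ ⟨v, h'.snd_mem⟩ := h
    rw [e1] at hr
    exact hr
  · have hr : (restr hc₂ hm₂ T).Adj ⟨u, h'.fst_mem⟩ ⟨v, h'.snd_mem⟩ := h
    rw [e2] at hr
    exact hr

lemma count_le [Finite V] (hc : H ⊔ K = ⊤) (hm : H.verts ∩ K.verts = {x})
    (hx : x ∈ H.verts) (hx' : x ∈ K.verts) :
    spanningTreeCount G ≤ spanningTreeCount H.coe * spanningTreeCount K.coe := by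
  have hc₂ : K ⊔ H = ⊤ := by rwa [sup_comm]
  have hm₂ : K.verts ∩ H.verts = {x} := by rwa [Set.inter_comm]
  have hfin1 : Finite H.coe.Subgraph := subgraph_finite _
  have hfin2 : Finite K.coe.Subgraph := subgraph_finite _
  set S : Set G.Subgraph := {T | T.IsSpanning ∧ T.coe.IsTree} with hS
  set S₁ : Set H.coe.Subgraph := {T | T.IsSpanning ∧ T.coe.IsTree} with hS₁
  set S₂ : Set K.coe.Subgraph := {T | T.IsSpanning ∧ T.coe.IsTree} with hS₂
  have hmaps : ∀ T ∈ S, (restr hc hm T, restr hc₂ hm₂ T) ∈ S₁ ×ˢ S₂ := fun T hT =>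
    ⟨⟨restr_spanning hc hm T, restr_isTree hc hm hx hT⟩,
     ⟨restr_spanning hc₂ hm₂ T, restr_isTree hc₂ hm₂ hx' hT⟩⟩
  have hinj : Set.InjOn (fun T => (restr hc hm T, restr hc₂ hm₂ T)) S := by
    intro T hT T' hT' hEq
    have e1 : restr hc hm T = restr hc hm T' := congrArg Prod.fst hEq
    have e2 : restr hc₂ hm₂ T = restr hc₂ hm₂ T' := congrArg Prod.snd hEq
    refine SimpleGraph.Subgraph.ext ?_ ?_
    · rw [SimpleGraph.Subgraph.isSpanning_iff.mp hT.1,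
        SimpleGraph.Subgraph.isSpanning_iff.mp hT'.1]
    · ext u v
      exact ⟨adj_of_eq hc hm hc₂ hm₂ e1 e2, adj_of_eq hc hm hc₂ hm₂ e1.symm e2.symm⟩
  calc spanningTreeCount G = S.ncard := rfl
    _ ≤ (S₁ ×ˢ S₂).ncard :=
        Set.ncard_le_ncard_of_injOn _ hmaps hinj (Set.toFinite _)
    _ = S₁.ncard * S₂.ncard := by
        rw [← Nat.card_coe_set_eq, ← Nat.card_coe_set_eq, ← Nat.card_coe_set_eq,
          Nat.card_congr (Equiv.Set.prod _ _), Nat.card_prod]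
    _ = spanningTreeCount H.coe * spanningTreeCount K.coe := rfl

lemma sdeg_coe (H : G.Subgraph) (v : ↥H.verts) : sdeg H.coe v = (H.neighborSet v.1).ncard := by
  rw [sdeg, ← Nat.card_coe_set_eq, ← Nat.card_coe_set_eq]
  exact Nat.card_congr (SimpleGraph.Subgraph.coeNeighborSetEquiv v)

lemma nbhd_eq (hc : H ⊔ K = ⊤) (hm : H.verts ∩ K.verts = {x}) {v : V}
    (hv : v ∈ H.verts) (hvx : v ≠ x) : G.neighborSet v = H.neighborSet v := by
  ext u
  constructor
  · intro h
    rcases adj_or hc h with h' | h'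
    · exact h'
    · exact absurd (eq_x hm hv h'.fst_mem) hvx
  · exact fun h => h.adj_sub

lemma nbhd_x (hc : H ⊔ K = ⊤) : G.neighborSet x = H.neighborSet x ∪ K.neighborSet x := by
  ext u
  constructor
  · intro h
    rcases adj_or hc h with h' | h'
    · exact Or.inl h'
    · exact Or.inr h'
  · rintro (h | h) <;> exact h.adj_sub

lemma nbhd_disj (hm : H.verts ∩ K.verts = {x}) :
    Disjoint (H.neighborSet x) (K.neighborSet x) := by
  rw [Set.disjoint_left]
  intro u h1 h2
  have hu : u = x := eq_x hm (h1.snd_mem) (h2.snd_mem)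
  exact h1.adj_sub.ne hu.symm

lemma sdeg_x [Fintype V] (hc : H ⊔ K = ⊤) (hm : H.verts ∩ K.verts = {x}) :
    sdeg G x = (H.neighborSet x).ncard + (K.neighborSet x).ncard := by
  rw [sdeg, nbhd_x hc, Set.ncard_union_eq (nbhd_disj hm) (Set.toFinite _) (Set.toFinite _)]

lemma deg_le_y {X Y : Set ↥H.verts} (hb : IsBipartitionOn H.coe X Y)
    (hx : x ∈ H.verts) (hxX : (⟨x, hx⟩ : ↥H.verts) ∈ X) [Fintype V] :
    (H.neighborSet x).ncard ≤ Y.ncard := by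
  have hsub : H.neighborSet x ⊆ Subtype.val '' Y := by
    intro u hu
    have hadj : H.coe.Adj ⟨x, hx⟩ ⟨u, hu.snd_mem⟩ := hu
    rcases hb.2.2 _ _ hadj with h | h
    · exact ⟨⟨u, hu.snd_mem⟩, h.2, rfl⟩
    · exact absurd hxX (Set.disjoint_right.mp hb.1 h.1)
  calc (H.neighborSet x).ncard ≤ (Subtype.val '' Y).ncard :=
        Set.ncard_le_ncard hsub (Set.toFinite _)
    _ = Y.ncard := Set.ncard_image_of_injective Y Subtype.val_injective

end GlueAux

set_option maxHeartbeats 1000000 in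
theorem stmt4 {V : Type*} [Fintype V] (G : SimpleGraph V) (H₁ H₂ : G.Subgraph)
    (hcover : H₁ ⊔ H₂ = ⊤) (x : V) (hmeet : H₁.verts ∩ H₂.verts = {x})
    (hx₁ : x ∈ H₁.verts) (hx₂ : x ∈ H₂.verts)
    (X₁ Y₁ : Set ↥H₁.verts) (X₂ Y₂ : Set ↥H₂.verts)
    (hb₁ : IsBipartitionOn H₁.coe X₁ Y₁) (hb₂ : IsBipartitionOn H₂.coe X₂ Y₂)
    (hxX₁ : (⟨x, hx₁⟩ : ↥H₁.verts) ∈ X₁) (hxX₂ : (⟨x, hx₂⟩ : ↥H₂.verts) ∈ X₂)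
    (hg₁ : FerrersGood H₁.coe X₁ Y₁) (hg₂ : FerrersGood H₂.coe X₂ Y₂) :
    FerrersGood G ((Subtype.val '' X₁) ∪ (Subtype.val '' X₂))
      ((Subtype.val '' Y₁) ∪ (Subtype.val '' Y₂)) := by
  have hc₂ : H₂ ⊔ H₁ = ⊤ := by rwa [sup_comm]
  have hm₂ : H₂.verts ∩ H₁.verts = {x} := by rwa [Set.inter_comm]
  unfold FerrersGood at hg₁ hg₂ ⊢
  set P₁ : ℚ := ∏ v : ↥H₁.verts, (sdeg H₁.coe v : ℚ) with hP₁def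
  set P₂ : ℚ := ∏ v : ↥H₂.verts, (sdeg H₂.coe v : ℚ) with hP₂def
  set QP : ℚ := ∏ v : V, (sdeg G v : ℚ) with hQPdef
  set a1 : ℚ := (X₁.ncard : ℚ) with ha1
  set a2 : ℚ := (X₂.ncard : ℚ) with ha2
  set b1 : ℚ := (Y₁.ncard : ℚ) with hb1
  set b2 : ℚ := (Y₂.ncard : ℚ) with hb2
  set a : ℚ := (((Subtype.val '' X₁) ∪ (Subtype.val '' X₂)).ncard : ℚ) with ha
  set b : ℚ := (((Subtype.val '' Y₁) ∪ (Subtype.val '' Y₂)).ncard : ℚ) with hb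
  set d1 : ℚ := ((H₁.neighborSet x).ncard : ℚ) with hd1
  set d2 : ℚ := ((H₂.neighborSet x).ncard : ℚ) with hd2
  -- counting
  have hcount : (spanningTreeCount G : ℚ) ≤
      (spanningTreeCount H₁.coe : ℚ) * (spanningTreeCount H₂.coe : ℚ) := by
    exact_mod_cast GlueAux.count_le hcover hmeet hx₁ hx₂
  -- nonnegativity
  have hP₁0 : (0:ℚ) ≤ P₁ := Finset.prod_nonneg (fun v _ => by positivity)
  have hP₂0 : (0:ℚ) ≤ P₂ := Finset.prod_nonneg (fun v _ => by positivity)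
  have hQP0 : (0:ℚ) ≤ QP := Finset.prod_nonneg (fun v _ => by positivity)
  have ha0 : (0:ℚ) ≤ a := by rw [ha]; positivity
  have hb0 : (0:ℚ) ≤ b := by rw [hb]; positivity
  have hRHS0 : (0:ℚ) ≤ QP / (a * b) := div_nonneg hQP0 (by positivity)
  have hB₁0 : (0:ℚ) ≤ P₁ / (a1 * b1) := div_nonneg hP₁0 (by positivity)
  have step1 : (spanningTreeCount G : ℚ) ≤ (P₁ / (a1 * b1)) * (P₂ / (a2 * b2)) :=
    hcount.trans (mul_le_mul hg₁ hg₂ (by positivity) hB₁0)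
  refine step1.trans ?_
  -- degenerate cases
  by_cases hdeg : d1 = 0 ∨ d2 = 0
  · have hPzero : P₁ / (a1 * b1) * (P₂ / (a2 * b2)) = 0 := by
      rcases hdeg with h0 | h0
      · have h0' : (H₁.neighborSet x).ncard = 0 := by
          rw [hd1] at h0; exact_mod_cast h0
        have : P₁ = 0 := by
          refine Finset.prod_eq_zero (Finset.mem_univ (⟨x, hx₁⟩ : ↥H₁.verts)) ?_
          rw [GlueAux.sdeg_coe]
          exact_mod_cast h0'
        rw [this]; simp
      · have h0' : (H₂.neighborSet x).ncard = 0 := by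
          rw [hd2] at h0; exact_mod_cast h0
        have : P₂ = 0 := by
          refine Finset.prod_eq_zero (Finset.mem_univ (⟨x, hx₂⟩ : ↥H₂.verts)) ?_
          rw [GlueAux.sdeg_coe]
          exact_mod_cast h0'
        rw [this]; simp
    rw [hPzero]; exact hRHS0
  push_neg at hdeg
  -- main case: both degrees positive
  have hd1n : 0 < (H₁.neighborSet x).ncard := by
    rcases Nat.eq_zero_or_pos (H₁.neighborSet x).ncard with h | h
    · exact absurd (by rw [hd1, h]; norm_num) hdeg.1
    · exact h
  have hd2n : 0 < (H₂.neighborSet x).ncard := by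
    rcases Nat.eq_zero_or_pos (H₂.neighborSet x).ncard with h | h
    · exact absurd (by rw [hd2, h]; norm_num) hdeg.2
    · exact h
  have hd1p : (0:ℚ) < d1 := by rw [hd1]; exact_mod_cast hd1n
  have hd2p : (0:ℚ) < d2 := by rw [hd2]; exact_mod_cast hd2n
  have hd1b : d1 ≤ b1 := by
    rw [hd1, hb1]
    exact_mod_cast GlueAux.deg_le_y hb₁ hx₁ hxX₁
  have hd2b : d2 ≤ b2 := by
    rw [hd2, hb2]
    exact_mod_cast GlueAux.deg_le_y hb₂ hx₂ hxX₂
  have hb1p : (0:ℚ) < b1 := lt_of_lt_of_le hd1p hd1b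
  have hb2p : (0:ℚ) < b2 := lt_of_lt_of_le hd2p hd2b
  have ha1p : (1:ℚ) ≤ a1 := by
    rw [ha1]
    exact_mod_cast (Set.ncard_pos (Set.toFinite _)).mpr ⟨_, hxX₁⟩
  have ha2p : (1:ℚ) ≤ a2 := by
    rw [ha2]
    exact_mod_cast (Set.ncard_pos (Set.toFinite _)).mpr ⟨_, hxX₂⟩
  -- cardinality identities
  have hXinter : (Subtype.val '' X₁) ∩ (Subtype.val '' X₂) = {x} := by
    apply Set.eq_singleton_iff_unique_mem.mpr
    constructor
    · exact ⟨⟨_, hxX₁, rfl⟩, ⟨_, hxX₂, rfl⟩⟩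
    · rintro v ⟨⟨w₁, hw₁, rfl⟩, ⟨w₂, hw₂, hw₂e⟩⟩
      exact GlueAux.eq_x hmeet w₁.2 (hw₂e ▸ w₂.2)
  have haq : a + 1 = a1 + a2 := by
    rw [ha, ha1, ha2]
    have := Set.ncard_union_add_ncard_inter (Subtype.val '' X₁) (Subtype.val '' X₂)
      (Set.toFinite _) (Set.toFinite _)
    rw [hXinter, Set.ncard_singleton, Set.ncard_image_of_injective X₁ Subtype.val_injective,
      Set.ncard_image_of_injective X₂ Subtype.val_injective] at this
    exact_mod_cast this
  have hYdisj : Disjoint (Subtype.val '' Y₁) (Subtype.val '' Y₂) := by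
    rw [Set.disjoint_left]
    rintro v ⟨w₁, hw₁, rfl⟩ ⟨w₂, hw₂, hw₂e⟩
    have hvx : w₁.1 = x := GlueAux.eq_x hmeet w₁.2 (hw₂e ▸ w₂.2)
    have : (⟨x, hx₁⟩ : ↥H₁.verts) ∈ Y₁ := by
      have : w₁ = ⟨x, hx₁⟩ := Subtype.ext hvx
      exact this ▸ hw₁
    exact Set.disjoint_left.mp hb₁.1 hxX₁ this
  have hbq : b = b1 + b2 := by
    rw [hb, hb1, hb2]
    rw [Set.ncard_union_eq hYdisj (Set.toFinite _) (Set.toFinite _),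
      Set.ncard_image_of_injective Y₁ Subtype.val_injective,
      Set.ncard_image_of_injective Y₂ Subtype.val_injective]
    push_cast
    ring
  have hap : (0:ℚ) < a := by linarith only [haq, ha1p, ha2p]
  have hbp : (0:ℚ) < b := by linarith only [hbq, hb1p, hb2p]
  -- product identities
  classical
  set A₁ : Finset V := H₁.verts.toFinset with hA₁
  set A₂ : Finset V := H₂.verts.toFinset with hA₂
  set f : V → ℚ := fun v => (sdeg G v : ℚ) with hf
  set g₁ : V → ℚ := fun v => ((H₁.neighborSet v).ncard : ℚ) with hg₁f
  set g₂ : V → ℚ := fun v => ((H₂.neighborSet v).ncard : ℚ) with hg₂f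
  have hxA₁ : x ∈ A₁ := Set.mem_toFinset.mpr hx₁
  have hxA₂ : x ∈ A₂ := Set.mem_toFinset.mpr hx₂
  have hP₁A : P₁ = ∏ v ∈ A₁, g₁ v := by
    rw [hP₁def]
    rw [Finset.prod_subtype A₁ (fun v => Set.mem_toFinset) g₁]
    refine Finset.prod_congr rfl (fun v _ => ?_)
    rw [GlueAux.sdeg_coe]
  have hP₂A : P₂ = ∏ v ∈ A₂, g₂ v := by
    rw [hP₂def]
    rw [Finset.prod_subtype A₂ (fun v => Set.mem_toFinset) g₂]
    refine Finset.prod_congr rfl (fun v _ => ?_)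
    rw [GlueAux.sdeg_coe]
  have herase₁ : ∏ v ∈ A₁.erase x, f v = ∏ v ∈ A₁.erase x, g₁ v := by
    refine Finset.prod_congr rfl (fun v hv => ?_)
    have hv1 : v ∈ H₁.verts := Set.mem_toFinset.mp (Finset.mem_of_mem_erase hv)
    have hv2 : v ≠ x := Finset.ne_of_mem_erase hv
    rw [hf, hg₁f]
    simp only []
    rw [sdeg, GlueAux.nbhd_eq hcover hmeet hv1 hv2]
  have herase₂ : ∏ v ∈ A₂.erase x, f v = ∏ v ∈ A₂.erase x, g₂ v := by
    refine Finset.prod_congr rfl (fun v hv => ?_)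
    have hv1 : v ∈ H₂.verts := Set.mem_toFinset.mp (Finset.mem_of_mem_erase hv)
    have hv2 : v ≠ x := Finset.ne_of_mem_erase hv
    rw [hf, hg₂f]
    simp only []
    rw [sdeg, GlueAux.nbhd_eq hc₂ hm₂ hv1 hv2]
  have hfx : f x = d1 + d2 := by
    rw [hf]
    simp only []
    rw [sdeg, GlueAux.nbhd_x hcover, Set.ncard_union_eq (GlueAux.nbhd_disj hmeet)
      (Set.toFinite _) (Set.toFinite _)]
    rw [hd1, hd2]
    push_cast
    ring
  have e₁ : (∏ v ∈ A₁, f v) * g₁ x = P₁ * f x := by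
    rw [hP₁A, ← Finset.mul_prod_erase A₁ f hxA₁, ← Finset.mul_prod_erase A₁ g₁ hxA₁, herase₁]
    ring
  have e₂ : (∏ v ∈ A₂, f v) * g₂ x = P₂ * f x := by
    rw [hP₂A, ← Finset.mul_prod_erase A₂ f hxA₂, ← Finset.mul_prod_erase A₂ g₂ hxA₂, herase₂]
    ring
  have hUniv : (Finset.univ : Finset V) = A₁ ∪ A₂ := by
    have hcov : H₁.verts ∪ H₂.verts = Set.univ := by
      rw [← SimpleGraph.Subgraph.verts_sup, hcover]
      rfl
    ext v
    have := Set.ext_iff.mp hcov v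
    simp only [Finset.mem_univ, Finset.mem_union, hA₁, hA₂, Set.mem_toFinset, true_iff]
    simp only [Set.mem_union, Set.mem_univ, iff_true] at this
    exact this
  have hInter : A₁ ∩ A₂ = {x} := by
    ext v
    have := Set.ext_iff.mp hmeet v
    simp only [Finset.mem_inter, hA₁, hA₂, Set.mem_toFinset, Finset.mem_singleton]
    simpa using this
  have eTot : QP * f x = (∏ v ∈ A₁, f v) * (∏ v ∈ A₂, f v) := by
    have := Finset.prod_union_inter (s₁ := A₁) (s₂ := A₂) (f := f)
    rw [hInter, Finset.prod_singleton, ← hUniv] at this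
    exact this
  have hgx1 : g₁ x = d1 := rfl
  have hgx2 : g₂ x = d2 := rfl
  have e0 : (QP * f x) * (d1 * d2) = (P₁ * f x) * (P₂ * f x) := by
    rw [eTot, ← e₁, ← e₂, hgx1, hgx2]
    ring
  have hfxpos : (0:ℚ) < f x := by rw [hfx]; linarith only [hd1p, hd2p]
  have key : QP * (d1 * d2) = P₁ * P₂ * (d1 + d2) := by
    have := mul_right_cancel₀ (ne_of_gt hfxpos)
      (show (QP * (d1 * d2)) * f x = (P₁ * P₂ * f x) * f x by
        calc (QP * (d1 * d2)) * f x = (QP * f x) * (d1 * d2) := by ring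
          _ = (P₁ * f x) * (P₂ * f x) := e0
          _ = (P₁ * P₂ * f x) * f x := by ring)
    rw [this, hfx]
  -- numerical inequality
  have hA : a ≤ a1 * a2 := by
    have h := mul_nonneg (sub_nonneg.mpr ha1p) (sub_nonneg.mpr ha2p)
    linarith only [h, haq]
  have hBnum : d1 * d2 * b ≤ (d1 + d2) * (b1 * b2) := by
    have t1 : 0 ≤ (b2 - d2) * (d1 * b1) :=
      mul_nonneg (sub_nonneg.mpr hd2b) (mul_nonneg hd1p.le hb1p.le)
    have t2 : 0 ≤ (b1 - d1) * (d2 * b2) :=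
      mul_nonneg (sub_nonneg.mpr hd1b) (mul_nonneg hd2p.le hb2p.le)
    rw [hbq]
    linarith only [t1, t2]
  have hnum : (d1 * d2) * (a * b) ≤ (d1 + d2) * (a1 * a2 * (b1 * b2)) := by
    calc (d1 * d2) * (a * b) = (d1 * d2 * b) * a := by ring
      _ ≤ (d1 * d2 * b) * (a1 * a2) :=
          mul_le_mul_of_nonneg_left hA
            (mul_nonneg (mul_nonneg hd1p.le hd2p.le) hbp.le)
      _ ≤ ((d1 + d2) * (b1 * b2)) * (a1 * a2) :=
          mul_le_mul_of_nonneg_right hBnum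
            (mul_nonneg (by linarith only [ha1p]) (by linarith only [ha2p]))
      _ = (d1 + d2) * (a1 * a2 * (b1 * b2)) := by ring
  -- final
  rw [div_mul_div_comm, div_le_div_iff₀ (by positivity) (by positivity)]
  have h3 : (P₁ * P₂ * (a * b)) * (d1 * d2) ≤ (QP * (a1 * b1 * (a2 * b2))) * (d1 * d2) := by
    calc (P₁ * P₂ * (a * b)) * (d1 * d2) = (P₁ * P₂) * ((d1 * d2) * (a * b)) := by ring
      _ ≤ (P₁ * P₂) * ((d1 + d2) * (a1 * a2 * (b1 * b2))) :=
          mul_le_mul_of_nonneg_left hnum (mul_nonneg hP₁0 hP₂0)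
      _ = (QP * (a1 * b1 * (a2 * b2))) * (d1 * d2) := by
          linear_combination (-(a1 * a2 * (b1 * b2))) * key
  exact le_of_mul_le_mul_right h3 (mul_pos hd1p hd2p)
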